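/- Consider the Markov chain (W_n) on the natural numbers with transition probabilities P(j, j-1) = 1/4, P(j, j) = 5/8, P(j, j+1) = 1/8 for j ≥ 1, and P(0,0) = 3/4, P(0,1) = 1/4. There exists a constant c₁ > 0 such that for all natural numbers N, r, k with N > 9r, the probability that W_N > k given W_0 = r is at most exp(-c₁ · k). -/

import Mathlib

/-- Transition kernel of the reflected random walk on ℕ:
from `j ≥ 1` move to `j-1` w.p. 1/4, stay w.p. 5/8, move to `j+1` w.p. 1/8;
from `0` stay w.p. 3/4 and move to `1` w.p. 1/4. -/
noncomputable def trafficKernel : ℕ → ℕ → ℝ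
  | 0, 0 => 3/4
  | 0, 1 => 1/4
  | 0, _ => 0
  | (j+1), i => if i = j then 1/4 else if i = j+1 then 5/8 else if i = j+2 then 1/8 else 0

/-- `nStepDist n r j` is the probability that the chain started at `r` is at `j` at time `n`. -/
noncomputable def nStepDist : ℕ → ℕ → ℕ → ℝ
  | 0, r, j => if j = r then 1 else 0
  | (n+1), r, j => ∑' i : ℕ, nStepDist n r i * trafficKernel i j

/-- `tailProb N r k = P(W_N > k | W_0 = r)`. -/
noncomputable def tailProb (N r k : ℕ) : ℝ :=
  ∑' j : ℕ, if k < j then nStepDist N r j else 0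

open Finset

lemma tk00 : trafficKernel 0 0 = 3/4 := rfl
lemma tk01 : trafficKernel 0 1 = 1/4 := rfl
lemma tk0big (j : ℕ) : trafficKernel 0 (j+2) = 0 := rfl
lemma tkrow (i j : ℕ) : trafficKernel (i+1) j
    = if j = i then 1/4 else if j = i+1 then 5/8 else if j = i+2 then 1/8 else 0 := rfl

lemma tk_nonneg (i j : ℕ) : 0 ≤ trafficKernel i j := by
  match i, j with
  | 0, 0 => rw [tk00]; norm_num
  | 0, 1 => rw [tk01]; norm_num
  | 0, (j+2) => rw [tk0big]
  | (i+1), j => rw [tkrow]; split_ifs <;> norm_num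

lemma tk_far {i j : ℕ} (h : i + 1 < j) : trafficKernel i j = 0 := by
  match i, j with
  | 0, 0 => omega
  | 0, 1 => omega
  | 0, (j+2) => rfl
  | (i+1), j =>
    rw [tkrow]
    have h1 : j ≠ i := by omega
    have h2 : j ≠ i+1 := by omega
    have h3 : j ≠ i+2 := by omega
    simp [h1, h2, h3]

lemma d_nonneg : ∀ (N r j : ℕ), 0 ≤ nStepDist N r j
  | 0, r, j => by unfold nStepDist; split_ifs <;> norm_num
  | (N+1), r, j => by
    unfold nStepDist
    exact tsum_nonneg fun i => mul_nonneg (d_nonneg N r i) (tk_nonneg i j)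

lemma d_far : ∀ (N r j : ℕ), r + N < j → nStepDist N r j = 0
  | 0, r, j, h => by unfold nStepDist; simp; omega
  | (N+1), r, j, h => by
    unfold nStepDist
    have : ∀ i : ℕ, nStepDist N r i * trafficKernel i j = 0 := by
      intro i
      rcases le_or_gt i (r + N) with hi | hi
      · rw [tk_far (by omega), mul_zero]
      · rw [d_far N r i hi, zero_mul]
    simp [this]

lemma d_zero (N r : ℕ) :
    nStepDist (N+1) r 0 = 3/4 * nStepDist N r 0 + 1/4 * nStepDist N r 1 := by
  show (∑' i : ℕ, nStepDist N r i * trafficKernel i 0) = _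
  rw [tsum_eq_sum (s := {0, 1}) ?_]
  · simp [tk00, tkrow]; ring
  · intro i hi
    match i with
    | 0 => simp at hi
    | 1 => simp at hi
    | (i+2) =>
      rw [tkrow]
      have h1 : (0:ℕ) ≠ i+1 := by omega
      have h2 : (0:ℕ) ≠ i+2 := by omega
      have h3 : (0:ℕ) ≠ i+3 := by omega
      simp [h1, h2, h3]

lemma d_one (N r : ℕ) :
    nStepDist (N+1) r 1 = 1/4 * nStepDist N r 0 + 5/8 * nStepDist N r 1 + 1/4 * nStepDist N r 2 := by
  show (∑' i : ℕ, nStepDist N r i * trafficKernel i 1) = _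
  rw [tsum_eq_sum (s := {0, 1, 2}) ?_]
  · simp [tk01, tkrow]; ring
  · intro i hi
    match i with
    | 0 => simp at hi
    | 1 => simp at hi
    | 2 => simp at hi
    | (i+3) =>
      rw [tkrow]
      have h1 : (1:ℕ) ≠ i+2 := by omega
      have h2 : (1:ℕ) ≠ i+3 := by omega
      have h3 : (1:ℕ) ≠ i+4 := by omega
      simp [h1, h2, h3]

lemma d_big (N r m : ℕ) :
    nStepDist (N+1) r (m+2) = 1/8 * nStepDist N r (m+1) + 5/8 * nStepDist N r (m+2)
      + 1/4 * nStepDist N r (m+3) := by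
  show (∑' i : ℕ, nStepDist N r i * trafficKernel i (m+2)) = _
  rw [tsum_eq_sum (s := {m+1, m+2, m+3}) ?_]
  · have e1 : trafficKernel (m+1) (m+2) = 1/8 := by
      rw [tkrow]
      have h1 : m+2 ≠ m := by omega
      have h2 : m+2 ≠ m+1 := by omega
      simp [h1, h2]
    have e2 : trafficKernel (m+2) (m+2) = 5/8 := by
      rw [tkrow]
      have h1 : m+2 ≠ m+1 := by omega
      simp [h1]
    have e3 : trafficKernel (m+3) (m+2) = 1/4 := by
      rw [tkrow]; simp
    have hne1 : m+1 ≠ m+2 := by omega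
    have hne2 : m+1 ≠ m+3 := by omega
    have hne3 : m+2 ≠ m+3 := by omega
    rw [Finset.sum_insert (by simp [hne1, hne2]), Finset.sum_insert (by simp [hne3]),
      Finset.sum_singleton, e1, e2, e3]
    ring
  · intro i hi
    simp only [Finset.mem_insert, Finset.mem_singleton] at hi
    push_neg at hi
    obtain ⟨hi1, hi2, hi3⟩ := hi
    match i with
    | 0 => rw [tk0big, mul_zero]
    | (i+1) =>
      rw [tkrow]
      have h1 : m+2 ≠ i := by omega
      have h2 : m+2 ≠ i+1 := by omega
      have h3 : m+2 ≠ i+2 := by omega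
      have h4 : m ≠ i := by omega
      simp [h1, h2, h3, h4]

lemma tail_rep (N r k B : ℕ) (hB : r + N + 1 ≤ B) :
    tailProb N r k = ∑ m ∈ range B, nStepDist N r (k+1+m) := by
  unfold tailProb
  rw [tsum_eq_sum (s := Finset.Ico (k+1) (k+1+B)) ?_]
  · rw [Finset.sum_congr rfl (g := fun j => nStepDist N r j)
      (fun j hj => by rw [if_pos]; exact (Finset.mem_Ico.mp hj).1)]
    rw [Finset.sum_Ico_eq_sum_range]
    rw [show k+1+B-(k+1) = B from by omega]
  · intro j hj
    rw [Finset.mem_Ico] at hj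
    push_neg at hj
    rcases le_or_gt j k with h | h
    · rw [if_neg (by omega)]
    · rw [if_pos h, d_far]
      omega

lemma d_big' (N r j : ℕ) (h : 2 ≤ j) :
    nStepDist (N+1) r j = 1/8 * nStepDist N r (j-1) + 5/8 * nStepDist N r j
      + 1/4 * nStepDist N r (j+1) := by
  obtain ⟨m, rfl⟩ : ∃ m, j = m+2 := ⟨j-2, by omega⟩
  have h1 : m+2-1 = m+1 := by omega
  have h2 : m+2+1 = m+3 := by omega
  rw [h1, h2]
  exact d_big N r m

lemma sum_d_congr (N r B : ℕ) {g h : ℕ → ℕ} (H : ∀ m, g m = h m) :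
    ∑ m ∈ range B, nStepDist N r (g m) = ∑ m ∈ range B, nStepDist N r (h m) :=
  Finset.sum_congr rfl fun m _ => by rw [H m]

lemma peel (N r c B : ℕ) :
    ∑ m ∈ range (B+1), nStepDist N r (c+m)
      = nStepDist N r c + ∑ m ∈ range B, nStepDist N r (c+1+m) := by
  rw [Finset.sum_range_succ']
  rw [sum_d_congr N r B (g := fun m => c+(m+1)) (h := fun m => c+1+m) (fun m => by beta_reduce; omega)]
  rw [add_comm, Nat.add_zero]

lemma sum_d_drop (N r c B : ℕ) (h : r+N < c+B) :
    ∑ m ∈ range (B+1), nStepDist N r (c+m) = ∑ m ∈ range B, nStepDist N r (c+m) := by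
  rw [Finset.sum_range_succ, d_far _ _ _ (by omega), add_zero]

lemma mass_pad (N r : ℕ) : ∀ B, r + N + 1 ≤ B →
    ∑ m ∈ range B, nStepDist N r m = 1 := by
  induction N with
  | zero =>
    intro B hB
    have : ∀ j ∈ range B, nStepDist 0 r j = if j = r then 1 else 0 := fun j _ => rfl
    rw [Finset.sum_congr rfl this, Finset.sum_ite_eq', if_pos (by simp; omega)]
  | succ N ih =>
    intro B hB
    have hpad : ∀ j ∈ range B, j ∉ range (r+N+2) → nStepDist (N+1) r j = 0 := by
      intro j _ hj
      rw [Finset.mem_range, not_lt] at hj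
      exact d_far _ _ _ (by omega)
    rw [← Finset.sum_subset (Finset.range_subset_range.mpr (by omega : r+N+2 ≤ B)) hpad]
    rw [sum_d_congr _ _ _ (g := fun m => m) (h := fun m => 0+m) (fun m => by beta_reduce; omega)]
    rw [show r+N+2 = (r+N)+1+1 from by omega, peel, peel]
    rw [Finset.sum_congr rfl (fun m _ => d_big' N r (0+1+1+m) (by omega))]
    simp only [Finset.sum_add_distrib, ← Finset.mul_sum]
    rw [sum_d_congr _ _ _ (g := fun m => 0+1+1+m-1) (h := fun m => 1+m) (fun m => by beta_reduce; omega)]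
    rw [sum_d_congr _ _ _ (g := fun m => 0+1+1+m) (h := fun m => 2+m) (fun m => by beta_reduce; omega)]
    rw [sum_d_congr _ _ _ (g := fun m => 0+1+1+m+1) (h := fun m => 3+m) (fun m => by beta_reduce; omega)]
    rw [show (0:ℕ)+1 = 1 from rfl]
    rw [d_zero, d_one]
    have M1 := ih (r+N+1) le_rfl
    have M2 := ih (r+N+2) (by omega)
    have M3 := ih (r+N+3) (by omega)
    rw [sum_d_congr _ _ _ (g := fun m => m) (h := fun m => 0+m) (fun m => by beta_reduce; omega),
      show r+N+1 = (r+N)+1 from rfl, peel] at M1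
    rw [sum_d_congr _ _ _ (g := fun m => m) (h := fun m => 0+m) (fun m => by beta_reduce; omega),
      show r+N+2 = (r+N)+1+1 from rfl, peel, peel] at M2
    rw [sum_d_congr _ _ _ (g := fun m => m) (h := fun m => 0+m) (fun m => by beta_reduce; omega),
      show r+N+3 = (r+N)+1+1+1 from rfl, peel, peel, peel] at M3
    rw [sum_d_congr _ _ _ (g := fun m => 0+1+m) (h := fun m => 1+m) (fun m => by beta_reduce; omega)] at M1
    rw [sum_d_congr _ _ _ (g := fun m => 0+1+1+m) (h := fun m => 2+m) (fun m => by beta_reduce; omega)] at M2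
    rw [sum_d_congr _ _ _ (g := fun m => 0+1+1+1+m) (h := fun m => 3+m) (fun m => by beta_reduce; omega)] at M3
    have e1 : nStepDist N r (0+1) = nStepDist N r 1 := rfl
    have e2 : nStepDist N r (0+1+1) = nStepDist N r 2 := rfl
    rw [e1] at M2 M3
    rw [e2] at M3
    linarith

lemma tail_nonneg (N r k : ℕ) : 0 ≤ tailProb N r k := by
  rw [tail_rep N r k (r+N+1) le_rfl]
  exact Finset.sum_nonneg fun m _ => d_nonneg _ _ _

lemma tail_le_one (N r k : ℕ) : tailProb N r k ≤ 1 := by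
  rw [tail_rep N r k (r+N+1) le_rfl]
  have h1 : ∑ m ∈ range (r+N+1), nStepDist N r (k+1+m)
      = ∑ j ∈ Finset.Ico (k+1) (k+1+(r+N+1)), nStepDist N r j := by
    rw [Finset.sum_Ico_eq_sum_range, show k+1+(r+N+1)-(k+1) = r+N+1 from by omega]
  rw [h1]
  calc ∑ j ∈ Finset.Ico (k+1) (k+1+(r+N+1)), nStepDist N r j
      ≤ ∑ j ∈ range (k+1+(r+N+1)), nStepDist N r j := by
        apply Finset.sum_le_sum_of_subset_of_nonneg
        · intro j hj
          rw [Finset.mem_range]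
          exact (Finset.mem_Ico.mp hj).2
        · exact fun j _ _ => d_nonneg _ _ _
    _ = 1 := mass_pad N r _ (by omega)

lemma tail_succ (N r k : ℕ) :
    tailProb (N+1) r (k+1) = 1/8 * tailProb N r k + 5/8 * tailProb N r (k+1)
      + 1/4 * tailProb N r (k+2) := by
  rw [tail_rep (N+1) r (k+1) (r+N+2) (by omega)]
  rw [Finset.sum_congr rfl (fun m _ => d_big' N r (k+1+1+m) (by omega))]
  simp only [Finset.sum_add_distrib, ← Finset.mul_sum]
  rw [sum_d_congr _ _ _ (g := fun m => k+1+1+m-1) (h := fun m => k+1+m) (fun m => by beta_reduce; omega)]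
  rw [sum_d_congr _ _ _ (g := fun m => k+1+1+m) (h := fun m => k+1+1+m) (fun m => by beta_reduce; omega)]
  rw [sum_d_congr _ _ _ (g := fun m => k+1+1+m+1) (h := fun m => k+2+1+m) (fun m => by beta_reduce; omega)]
  rw [← tail_rep N r k (r+N+2) (by omega), ← tail_rep N r (k+1) (r+N+2) (by omega),
    ← tail_rep N r (k+2) (r+N+2) (by omega)]

lemma tail_zero (N r : ℕ) :
    tailProb (N+1) r 0 = 1/4 + 1/2 * tailProb N r 0 + 1/4 * tailProb N r 1 := by
  rw [tail_rep (N+1) r 0 ((r+N+1)+1) (by omega)]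
  rw [sum_d_congr _ _ _ (g := fun m => 0+1+m) (h := fun m => 1+m) (fun m => by beta_reduce; omega)]
  rw [peel]
  rw [Finset.sum_congr rfl (fun m _ => d_big' N r (1+1+m) (by omega))]
  simp only [Finset.sum_add_distrib, ← Finset.mul_sum]
  rw [sum_d_congr _ _ _ (g := fun m => 1+1+m-1) (h := fun m => 1+m) (fun m => by beta_reduce; omega)]
  rw [sum_d_congr _ _ _ (g := fun m => 1+1+m) (h := fun m => 2+m) (fun m => by beta_reduce; omega)]
  rw [sum_d_congr _ _ _ (g := fun m => 1+1+m+1) (h := fun m => 3+m) (fun m => by beta_reduce; omega)]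
  rw [d_one]
  -- tail identities
  have T0 : tailProb N r 0 = ∑ m ∈ range (r+N+1), nStepDist N r (1+m) := by
    rw [tail_rep N r 0 (r+N+1) le_rfl]
  have T1 : tailProb N r 1 = ∑ m ∈ range (r+N+1), nStepDist N r (2+m) := by
    rw [tail_rep N r 1 (r+N+1) le_rfl]
  have T2 : tailProb N r 2 = ∑ m ∈ range (r+N+1), nStepDist N r (3+m) := by
    rw [tail_rep N r 2 (r+N+1) le_rfl]
  -- point mass relations
  have R0 : tailProb N r 0 = nStepDist N r 1 + ∑ m ∈ range (r+N), nStepDist N r (2+m) := by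
    rw [T0, show r+N+1 = (r+N)+1 from rfl, peel]
  have R1 : tailProb N r 1 = nStepDist N r 2 + ∑ m ∈ range (r+N), nStepDist N r (3+m) := by
    rw [T1, show r+N+1 = (r+N)+1 from rfl, peel]
  have D1 : ∑ m ∈ range (r+N+1), nStepDist N r (2+m) = tailProb N r 1 := by
    rw [T1]
  have D2 : ∑ m ∈ range (r+N+1), nStepDist N r (3+m) = tailProb N r 2 := by
    rw [T2]
  have S1 : ∑ m ∈ range (r+N+1), nStepDist N r (2+m)
      = ∑ m ∈ range (r+N), nStepDist N r (2+m) := sum_d_drop N r 2 (r+N) (by omega)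
  have S2 : ∑ m ∈ range (r+N+1), nStepDist N r (3+m)
      = ∑ m ∈ range (r+N), nStepDist N r (3+m) := sum_d_drop N r 3 (r+N) (by omega)
  have M : nStepDist N r 0 + tailProb N r 0 = 1 := by
    have := mass_pad N r ((r+N+1)+1) (by omega)
    rw [sum_d_congr _ _ _ (g := fun m => m) (h := fun m => 0+m) (fun m => by beta_reduce; omega),
      peel] at this
    rw [T0]
    rw [sum_d_congr _ _ _ (g := fun m => 1+m) (h := fun m => 0+1+m) (fun m => by beta_reduce; omega)]
    exact this
  rw [T0, T1, T2] at *
  linarith [R0, R1, M, S1, S2]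

/-- pmf of the free walk with steps +1 w.p. 1/8, 0 w.p. 5/8, -1 w.p. 1/4. -/
noncomputable def fw : ℕ → ℤ → ℝ
  | 0, x => if x = 0 then 1 else 0
  | (M+1), x => 1/8 * fw M (x-1) + 5/8 * fw M x + 1/4 * fw M (x+1)

/-- tail function of the free walk: G M z = P(S_M ≥ z). -/
noncomputable def G (M : ℕ) (z : ℤ) : ℝ := ∑ x ∈ Finset.Icc z (M:ℤ), fw M x

lemma fw_nonneg : ∀ (M : ℕ) (x : ℤ), 0 ≤ fw M x
  | 0, x => by unfold fw; split_ifs <;> norm_num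
  | (M+1), x => by
    unfold fw
    have h1 := fw_nonneg M (x-1)
    have h2 := fw_nonneg M x
    have h3 := fw_nonneg M (x+1)
    linarith

lemma fw_hi : ∀ (M : ℕ) (x : ℤ), (M:ℤ) < x → fw M x = 0
  | 0, x, h => by unfold fw; rw [if_neg]; omega
  | (M+1), x, h => by
    unfold fw
    push_cast at h
    rw [fw_hi M (x-1) (by omega), fw_hi M x (by omega), fw_hi M (x+1) (by omega)]
    ring

lemma fw_lo : ∀ (M : ℕ) (x : ℤ), x < -(M:ℤ) → fw M x = 0
  | 0, x, h => by unfold fw; rw [if_neg]; omega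
  | (M+1), x, h => by
    unfold fw
    push_cast at h
    rw [fw_lo M (x-1) (by omega), fw_lo M x (by omega), fw_lo M (x+1) (by omega)]
    ring

lemma sum_shift (f : ℤ → ℝ) (a b c : ℤ) :
    ∑ x ∈ Finset.Icc a b, f (x + c) = ∑ x ∈ Finset.Icc (a+c) (b+c), f x := by
  rw [← Finset.map_add_right_Icc, Finset.sum_map]
  rfl

lemma sum_trunc (M : ℕ) (f : ℤ → ℝ) (a b : ℤ) (ha : a ≤ -(M:ℤ)) (hb : (M:ℤ) ≤ b) :
    ∑ x ∈ Finset.Icc a b, fw M x * f x = ∑ x ∈ Finset.Icc (-(M:ℤ)) M, fw M x * f x := by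
  symm
  apply Finset.sum_subset (Finset.Icc_subset_Icc ha hb)
  intro x hx hx'
  rw [Finset.mem_Icc] at hx hx'
  push_neg at hx'
  rcases lt_or_ge x (-(M:ℤ)) with h | h
  · rw [fw_lo M x h, zero_mul]
  · rw [fw_hi M x (hx' h), zero_mul]

lemma fw_step (M : ℕ) (x : ℤ) :
    fw (M+1) x = 1/8 * fw M (x-1) + 5/8 * fw M x + 1/4 * fw M (x+1) := rfl

lemma shift_sum_fw (M : ℕ) (c : ℤ) (hc1 : -1 ≤ c) (hc2 : c ≤ 1) (f : ℤ → ℝ) :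
    ∑ x ∈ Finset.Icc (-(M:ℤ)-1) ((M:ℤ)+1), fw M (x + c) * f (x + c)
      = ∑ y ∈ Finset.Icc (-(M:ℤ)) M, fw M y * f y := by
  have h1 : ∑ x ∈ Finset.Icc (-(M:ℤ)-1) ((M:ℤ)+1), fw M (x + c) * f (x + c)
      = ∑ y ∈ Finset.Icc (-(M:ℤ)-1+c) ((M:ℤ)+1+c), fw M y * f y := by
    rw [← Finset.map_add_right_Icc, Finset.sum_map]
    rfl
  rw [h1]
  exact sum_trunc M f _ _ (by omega) (by omega)

lemma bounds_cast (M : ℕ) : (-((M:ℤ)+1)) = -(M:ℤ)-1 := by ring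

lemma moment_step (M : ℕ) (w fm f0 fp : ℤ → ℝ)
    (hm : ∀ y : ℤ, fm y = w (y+1)) (h0 : ∀ y : ℤ, f0 y = w y) (hp : ∀ y : ℤ, fp y = w (y-1)) :
    ∑ x ∈ Finset.Icc (-(M:ℤ)-1) ((M:ℤ)+1), fw (M+1) x * w x
      = 1/8 * ∑ y ∈ Finset.Icc (-(M:ℤ)) M, fw M y * fm y
        + 5/8 * ∑ y ∈ Finset.Icc (-(M:ℤ)) M, fw M y * f0 y
        + 1/4 * ∑ y ∈ Finset.Icc (-(M:ℤ)) M, fw M y * fp y := by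
  have e : ∀ x : ℤ, fw (M+1) x * w x
      = 1/8 * (fw M (x + (-1)) * fm (x + (-1))) + 5/8 * (fw M (x + 0) * f0 (x + 0))
        + 1/4 * (fw M (x + 1) * fp (x + 1)) := by
    intro x
    rw [fw_step, hm, h0, hp]
    rw [show x + (-1) = x - 1 from by ring, show x + 0 = x from by ring,
      show x - 1 + 1 = x from by ring, show x + 1 - 1 = x from by ring]
    ring
  rw [Finset.sum_congr rfl (fun x _ => e x)]
  simp only [Finset.sum_add_distrib, ← Finset.mul_sum]
  rw [shift_sum_fw M (-1) (by norm_num) (by norm_num) fm,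
    shift_sum_fw M 0 (by norm_num) (by norm_num) f0,
    shift_sum_fw M 1 (by norm_num) (by norm_num) fp]

lemma fw_mass : ∀ M : ℕ, ∑ x ∈ Finset.Icc (-(M:ℤ)) M, fw M x * 1 = 1
  | 0 => by norm_num [fw]
  | (M+1) => by
    push_cast
    rw [show (-((M:ℤ)+1)) = (-(M:ℤ)-1) from by ring]
    rw [moment_step M (fun _ => 1) (fun _ => 1) (fun _ => 1) (fun _ => 1)
      (fun y => rfl) (fun y => rfl) (fun y => rfl)]
    rw [fw_mass M]
    norm_num

lemma fw_mu1 : ∀ M : ℕ, ∑ x ∈ Finset.Icc (-(M:ℤ)) M, fw M x * (x:ℝ) = -(M:ℝ)/8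
  | 0 => by norm_num [fw]
  | (M+1) => by
    push_cast
    rw [show (-((M:ℤ)+1)) = (-(M:ℤ)-1) from by ring]
    rw [moment_step M (fun x => (x:ℝ)) (fun y => (y:ℝ)+1) (fun y => (y:ℝ)) (fun y => (y:ℝ)-1)
      (fun y => by push_cast; ring) (fun y => rfl) (fun y => by push_cast; ring)]
    have E1 : ∑ y ∈ Finset.Icc (-(M:ℤ)) M, fw M y * ((y:ℝ)+1)
        = ∑ y ∈ Finset.Icc (-(M:ℤ)) M, (fw M y * (y:ℝ) + fw M y * 1) := by
      apply Finset.sum_congr rfl; intro y _; ring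
    have E2 : ∑ y ∈ Finset.Icc (-(M:ℤ)) M, fw M y * ((y:ℝ)-1)
        = ∑ y ∈ Finset.Icc (-(M:ℤ)) M, (fw M y * (y:ℝ) - fw M y * 1) := by
      apply Finset.sum_congr rfl; intro y _; ring
    rw [E1, E2, Finset.sum_add_distrib, Finset.sum_sub_distrib, fw_mass M, fw_mu1 M]
    push_cast
    ring

lemma fw_mu2 : ∀ M : ℕ, ∑ x ∈ Finset.Icc (-(M:ℤ)) M, fw M x * (x:ℝ)^2
      = (23*M + M^2)/64
  | 0 => by norm_num [fw]
  | (M+1) => by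
    push_cast
    rw [show (-((M:ℤ)+1)) = (-(M:ℤ)-1) from by ring]
    rw [moment_step M (fun x => (x:ℝ)^2) (fun y => ((y:ℝ)+1)^2) (fun y => (y:ℝ)^2)
      (fun y => ((y:ℝ)-1)^2)
      (fun y => by push_cast; ring) (fun y => rfl) (fun y => by push_cast; ring)]
    have E1 : ∑ y ∈ Finset.Icc (-(M:ℤ)) M, fw M y * ((y:ℝ)+1)^2
        = ∑ y ∈ Finset.Icc (-(M:ℤ)) M, (fw M y * (y:ℝ)^2 + 2 * (fw M y * (y:ℝ)) + fw M y * 1) := by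
      apply Finset.sum_congr rfl; intro y _; ring
    have E2 : ∑ y ∈ Finset.Icc (-(M:ℤ)) M, fw M y * ((y:ℝ)-1)^2
        = ∑ y ∈ Finset.Icc (-(M:ℤ)) M, (fw M y * (y:ℝ)^2 - 2 * (fw M y * (y:ℝ)) + fw M y * 1) := by
      apply Finset.sum_congr rfl; intro y _; ring
    have E1' : ∑ y ∈ Finset.Icc (-(M:ℤ)) M, (fw M y * (y:ℝ)^2 + 2 * (fw M y * (y:ℝ)) + fw M y * 1)
        = ∑ y ∈ Finset.Icc (-(M:ℤ)) M, fw M y * (y:ℝ)^2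
          + 2 * ∑ y ∈ Finset.Icc (-(M:ℤ)) M, fw M y * (y:ℝ)
          + ∑ y ∈ Finset.Icc (-(M:ℤ)) M, fw M y * 1 := by
      simp only [Finset.sum_add_distrib, ← Finset.mul_sum]
    have E2' : ∑ y ∈ Finset.Icc (-(M:ℤ)) M, (fw M y * (y:ℝ)^2 - 2 * (fw M y * (y:ℝ)) + fw M y * 1)
        = ∑ y ∈ Finset.Icc (-(M:ℤ)) M, fw M y * (y:ℝ)^2
          - 2 * ∑ y ∈ Finset.Icc (-(M:ℤ)) M, fw M y * (y:ℝ)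
          + ∑ y ∈ Finset.Icc (-(M:ℤ)) M, fw M y * 1 := by
      rw [Finset.sum_add_distrib, Finset.sum_sub_distrib, ← Finset.mul_sum]
    rw [E1, E2, E1', E2', fw_mass M, fw_mu1 M, fw_mu2 M]
    push_cast
    ring

lemma G_nonneg (M : ℕ) (z : ℤ) : 0 ≤ G M z :=
  Finset.sum_nonneg fun x _ => fw_nonneg M x

lemma G_zero_le (z : ℤ) (h : z ≤ 0) : G 0 z = 1 := by
  unfold G
  rw [Finset.sum_eq_single 0]
  · rfl
  · intro x hx hx0
    unfold fw
    rw [if_neg hx0]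
  · intro h0
    exfalso
    exact h0 (Finset.mem_Icc.mpr ⟨h, by positivity⟩)

lemma G_zero_gt (z : ℤ) (h : 0 < z) : G 0 z = 0 := by
  unfold G
  apply Finset.sum_eq_zero
  intro x hx
  rw [Finset.mem_Icc] at hx
  unfold fw
  rw [if_neg (by omega)]

lemma G_rec (M : ℕ) (z : ℤ) :
    G (M+1) z = 1/8 * G M (z-1) + 5/8 * G M z + 1/4 * G M (z+1) := by
  unfold G
  push_cast
  have e1 : ∑ x ∈ Finset.Icc z ((M:ℤ)+1), fw (M+1) x
      = ∑ x ∈ Finset.Icc z ((M:ℤ)+1), (1/8 * fw M (x-1) + 5/8 * fw M x + 1/4 * fw M (x+1)) :=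
    Finset.sum_congr rfl fun x _ => fw_step M x
  rw [e1]
  simp only [Finset.sum_add_distrib, ← Finset.mul_sum]
  congr 1
  · congr 1
    · -- ∑ fw M (x-1) over Icc z (M+1) = ∑ fw M over Icc (z-1) M
      congr 1
      have : ∑ x ∈ Finset.Icc z ((M:ℤ)+1), fw M (x - 1)
          = ∑ x ∈ Finset.Icc z ((M:ℤ)+1), fw M (x + (-1)) := by
        apply Finset.sum_congr rfl; intro x _; rw [show x + (-1) = x - 1 from by ring]
      rw [this, sum_shift (fw M) z ((M:ℤ)+1) (-1)]
      rw [show (M:ℤ)+1+(-1) = (M:ℤ) from by ring, show z + (-1) = z - 1 from by ring]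
    · -- middle: Icc z (M+1) vs Icc z M : drop top zero term
      congr 1
      symm
      apply Finset.sum_subset (Finset.Icc_subset_Icc_right (by omega))
      intro x hx hx'
      rw [Finset.mem_Icc] at hx hx'
      exact fw_hi M x (by omega)
  · -- ∑ fw M (x+1) over Icc z (M+1) = ∑ fw M over Icc (z+1) M
    congr 1
    rw [sum_shift (fw M) z ((M:ℤ)+1) 1]
    symm
    apply Finset.sum_subset (Finset.Icc_subset_Icc_right (by omega))
    intro x hx hx'
    rw [Finset.mem_Icc] at hx hx'
    exact fw_hi M x (by omega)

lemma G_chernoff (M : ℕ) (z : ℤ) :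
    G M z ≤ (647/650 : ℝ)^M * (26/25 : ℝ)^(-z) := by
  induction M generalizing z with
  | zero =>
    rcases le_or_gt z 0 with h | h
    · rw [G_zero_le z h]
      simp only [pow_zero, one_mul]
      calc (1:ℝ) = (26/25 : ℝ)^(0:ℤ) := by norm_num
        _ ≤ (26/25 : ℝ)^(-z) := by
          apply zpow_le_zpow_right₀ (by norm_num) (by omega)
    · rw [G_zero_gt z h]
      positivity
  | succ M ih =>
    rw [G_rec]
    have h1 := ih (z-1)
    have h2 := ih z
    have h3 := ih (z+1)
    have key : 1/8 * ((647/650 : ℝ)^M * (26/25 : ℝ)^(-(z-1)))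
        + 5/8 * ((647/650 : ℝ)^M * (26/25 : ℝ)^(-z))
        + 1/4 * ((647/650 : ℝ)^M * (26/25 : ℝ)^(-(z+1)))
        = (647/650 : ℝ)^(M+1) * (26/25 : ℝ)^(-z) := by
      have a1 : (26/25 : ℝ)^(-(z-1)) = (26/25 : ℝ)^(-z) * (26/25 : ℝ) := by
        rw [show -(z-1) = -z + 1 from by ring, zpow_add₀ (by norm_num : (26/25:ℝ) ≠ 0)]
        norm_num
      have a3 : (26/25 : ℝ)^(-(z+1)) = (26/25 : ℝ)^(-z) * (25/26 : ℝ) := by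
        rw [show -(z+1) = -z + (-1) from by ring, zpow_add₀ (by norm_num : (26/25:ℝ) ≠ 0)]
        norm_num
      rw [a1, a3, pow_succ]
      ring
    rw [← key]
    have p1 : (0:ℝ) ≤ 1/8 := by norm_num
    gcongr

lemma G_cantelli (M : ℕ) (z : ℤ) (ht : 0 < (z:ℝ) + M/8) :
    G M z ≤ (23*M/64) / (23*M/64 + ((z:ℝ) + M/8)^2) := by
  set V : ℝ := 23*M/64 with hV
  set t : ℝ := (z:ℝ) + M/8 with htdef
  have hV0 : 0 ≤ V := by positivity
  set a : ℝ := V/t with ha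
  have ha0 : 0 ≤ a := div_nonneg hV0 (le_of_lt ht)
  have hta : 0 < t + a := by linarith
  set c : ℝ := M/8 + a with hc
  -- step 1-3: G M z ≤ ∑ over Icc(-M,M) of fw * w
  have step1 : G M z ≤ ∑ x ∈ Finset.Icc (-(M:ℤ)) M, fw M x * (((x:ℝ)+c)/(t+a))^2 := by
    have s1 : G M z ≤ ∑ x ∈ Finset.Icc z (M:ℤ), fw M x * (((x:ℝ)+c)/(t+a))^2 := by
      unfold G
      apply Finset.sum_le_sum
      intro x hx
      rw [Finset.mem_Icc] at hx
      have hx1 : t + a ≤ (x:ℝ) + c := by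
        have : (z:ℝ) ≤ (x:ℝ) := by exact_mod_cast hx.1
        rw [hc, htdef]; linarith
      have h1 : (1:ℝ) ≤ (((x:ℝ)+c)/(t+a))^2 := by
        have : (1:ℝ) ≤ ((x:ℝ)+c)/(t+a) := (one_le_div hta).mpr hx1
        nlinarith
      nth_rewrite 1 [← mul_one (fw M x)]
      exact mul_le_mul_of_nonneg_left h1 (fw_nonneg M x)
    have s2 : ∑ x ∈ Finset.Icc z (M:ℤ), fw M x * (((x:ℝ)+c)/(t+a))^2
        ≤ ∑ x ∈ Finset.Icc (min z (-(M:ℤ))) (M:ℤ), fw M x * (((x:ℝ)+c)/(t+a))^2 := by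
      apply Finset.sum_le_sum_of_subset_of_nonneg
      · apply Finset.Icc_subset_Icc_left
        exact min_le_left _ _
      · intro x _ _
        exact mul_nonneg (fw_nonneg M x) (sq_nonneg _)
    have s3 : ∑ x ∈ Finset.Icc (min z (-(M:ℤ))) (M:ℤ), fw M x * (((x:ℝ)+c)/(t+a))^2
        = ∑ x ∈ Finset.Icc (-(M:ℤ)) (M:ℤ), fw M x * (((x:ℝ)+c)/(t+a))^2 :=
      sum_trunc M _ _ _ (min_le_right _ _) le_rfl
    linarith
  -- step 4: evaluate the quadratic expectation
  have step4 : ∑ x ∈ Finset.Icc (-(M:ℤ)) M, fw M x * (((x:ℝ)+c)/(t+a))^2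
      = (V + a^2) / (t+a)^2 := by
    have expand : ∀ x ∈ Finset.Icc (-(M:ℤ)) (M:ℤ), fw M x * (((x:ℝ)+c)/(t+a))^2
        = (fw M x * (x:ℝ)^2 + (2*c) * (fw M x * (x:ℝ)) + c^2 * (fw M x * 1)) / (t+a)^2 := by
      intro x _
      field_simp
      ring
    rw [Finset.sum_congr rfl expand]
    rw [← Finset.sum_div]
    have split : ∑ x ∈ Finset.Icc (-(M:ℤ)) M,
        (fw M x * (x:ℝ)^2 + (2*c) * (fw M x * (x:ℝ)) + c^2 * (fw M x * 1))
        = (∑ x ∈ Finset.Icc (-(M:ℤ)) M, fw M x * (x:ℝ)^2)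
          + (2*c) * (∑ x ∈ Finset.Icc (-(M:ℤ)) M, fw M x * (x:ℝ))
          + c^2 * (∑ x ∈ Finset.Icc (-(M:ℤ)) M, fw M x * 1) := by
      simp only [Finset.sum_add_distrib, ← Finset.mul_sum]
    rw [split, fw_mass M, fw_mu1 M, fw_mu2 M]
    congr 1
    rw [hc, hV, ha]
    field_simp
    ring
  -- step 5
  have step5 : (V + a^2) / (t+a)^2 = V / (V + t^2) := by
    rw [ha]
    have ht0 : t ≠ 0 := ne_of_gt ht
    have h2 : t + V/t ≠ 0 := ne_of_gt hta
    field_simp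
    ring
  calc G M z ≤ ∑ x ∈ Finset.Icc (-(M:ℤ)) M, fw M x * (((x:ℝ)+c)/(t+a))^2 := step1
    _ = (V + a^2) / (t+a)^2 := step4
    _ = V / (V + t^2) := step5

lemma tail_base (r k : ℕ) : tailProb 0 r k = if k < r then 1 else 0 := by
  unfold tailProb
  have e : ∀ j : ℕ, (if k < j then nStepDist 0 r j else 0)
      = if j = r then (if k < r then (1:ℝ) else 0) else 0 := by
    intro j
    by_cases h : j = r
    · subst h
      unfold nStepDist
      simp
    · unfold nStepDist
      rw [if_neg h]
      simp [h]
  rw [tsum_congr e]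
  exact tsum_ite_eq r _

/-- Main supersolution bound: stationary tail + free-walk tail. -/
lemma key_bound (r : ℕ) : ∀ N k : ℕ, tailProb N r k ≤ 2/3 * (1/2:ℝ)^k + G N ((k:ℤ) + 1 - r) := by
  intro N
  induction N with
  | zero =>
    intro k
    rw [tail_base]
    by_cases h : k < r
    · rw [if_pos h, G_zero_le _ (by push_cast; omega)]
      have : (0:ℝ) ≤ 2/3 * (1/2:ℝ)^k := by positivity
      linarith
    · rw [if_neg h]
      have h1 : (0:ℝ) ≤ 2/3 * (1/2:ℝ)^k := by positivity
      have h2 := G_nonneg 0 ((k:ℤ) + 1 - r)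
      linarith
  | succ N ih =>
    intro k
    match k with
    | 0 =>
      rw [tail_zero]
      have i0 := ih 0
      have i1 := ih 1
      rw [G_rec]
      have e0 : ((0:ℕ):ℤ) + 1 - r = (1:ℤ) - r := by push_cast; ring
      have e1 : ((1:ℕ):ℤ) + 1 - r = ((1:ℤ) - r) + 1 := by push_cast; ring
      rw [e0] at i0 ⊢
      rw [e1] at i1
      rw [show (1:ℤ) - r - 1 = -(r:ℤ) from by ring]
      have g0 := G_nonneg N (-(r:ℤ))
      have g1 := G_nonneg N ((1:ℤ) - r)
      norm_num at i0 i1 ⊢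
      linarith
    | (k+1) =>
      rw [tail_succ]
      have i0 := ih k
      have i1 := ih (k+1)
      have i2 := ih (k+2)
      rw [G_rec]
      have e0 : ((k:ℕ):ℤ) + 1 - r = (((k+1:ℕ)):ℤ) + 1 - r - 1 := by push_cast; ring
      have e2 : (((k+2:ℕ)):ℤ) + 1 - r = (((k+1:ℕ)):ℤ) + 1 - r + 1 := by push_cast; ring
      rw [e0] at i0
      rw [e2] at i2
      have pw : (2/3 : ℝ) * (1/2)^k = 2 * (2/3 * (1/2)^(k+1)) := by
        rw [pow_succ]; ring
      have pw2 : (2/3 : ℝ) * (1/2)^(k+2) = (1/2) * (2/3 * (1/2)^(k+1)) := by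
        rw [pow_succ]; ring
      nlinarith [i0, i1, i2]

lemma cantelli_value (M r : ℕ) (b z0 : ℝ) (hb : 0 < b) (hb1 : b < 1) (z : ℤ)
    (hz : (z:ℝ) = z0 - r) (hz0 : 3 ≤ z0)
    (hM : 9*r ≤ M)
    (hineq : (1-b) * (23*M/64) ≤ b * (z0 + (M:ℝ)/72)^2) :
    G M z ≤ b := by
  have hr : (r:ℝ) ≤ (M:ℝ)/9 := by
    rw [le_div_iff₀ (by norm_num : (0:ℝ) < 9)]
    have : r * 9 ≤ M := by omega
    exact_mod_cast this
  have htlow : z0 + (M:ℝ)/72 ≤ (z:ℝ) + M/8 := by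
    rw [hz]
    have : (M:ℝ)/72 + (M:ℝ)/9 ≤ (M:ℝ)/8 := by ring_nf; linarith [Nat.cast_nonneg (α := ℝ) M]
    linarith
  have ht : 0 < (z:ℝ) + M/8 := by
    have : (0:ℝ) ≤ (M:ℝ)/72 := by positivity
    linarith
  have hca := G_cantelli M z ht
  set V : ℝ := 23*M/64 with hV
  set t : ℝ := (z:ℝ) + M/8 with htd
  have hV0 : 0 ≤ V := by positivity
  have ht2 : (z0 + (M:ℝ)/72)^2 ≤ t^2 := by
    apply sq_le_sq'
    · nlinarith
    · exact htlow
  have hden : 0 < V + t^2 := by positivity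
  clear_value V t
  have : V / (V + t^2) ≤ b := by
    rw [div_le_iff₀ hden]
    linarith [mul_le_mul_of_nonneg_left ht2 hb.le]
  linarith

lemma theta_fact : (647/650:ℝ)^9 * (26/25) ≤ 1 := by
  rw [div_pow]
  rw [div_mul_div_comm]
  rw [div_le_one (by positivity)]
  norm_num

lemma chern_combo (N r k : ℕ) (h : 9*r < N) :
    G N ((k:ℤ) + 1 - r) ≤ (647/650:ℝ) * (25/26)^(k+1) := by
  have h1 := G_chernoff N ((k:ℤ) + 1 - r)
  have e1 : (26/25:ℝ)^(-((k:ℤ) + 1 - r)) = (26/25)^(r:ℕ) * (25/26)^(k+1) := by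
    rw [show -((k:ℤ) + 1 - r) = (r:ℤ) + (-((k:ℤ)+1)) from by ring]
    rw [zpow_add₀ (by norm_num : (26/25:ℝ) ≠ 0)]
    congr 1
    · rw [show -((k:ℤ)+1) = -(((k+1:ℕ)):ℤ) from by push_cast; ring, zpow_neg, zpow_natCast,
        ← inv_pow]
      norm_num
  rw [e1] at h1
  have h2 : (647/650:ℝ)^N * ((26/25)^(r:ℕ) * (25/26)^(k+1))
      ≤ (647/650:ℝ) * (25/26)^(k+1) := by
    have hN : N = 9*r + 1 + (N - (9*r+1)) := by omega
    have key : (647/650:ℝ)^N * (26/25)^(r:ℕ) ≤ 647/650 := by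
      calc (647/650:ℝ)^N * (26/25)^(r:ℕ)
          ≤ (647/650:ℝ)^(9*r+1) * (26/25)^(r:ℕ) := by
            apply mul_le_mul_of_nonneg_right _ (by positivity)
            apply pow_le_pow_of_le_one (by norm_num) (by norm_num)
            omega
        _ = (647/650:ℝ) * (((647/650:ℝ)^9 * (26/25))^r) := by
            rw [pow_succ, pow_mul, mul_pow]
            ring
        _ ≤ (647/650:ℝ) * 1 := by
            apply mul_le_mul_of_nonneg_left _ (by norm_num)
            exact pow_le_one₀ (by positivity) theta_fact
        _ = 647/650 := by ring
    calc (647/650:ℝ)^N * ((26/25)^(r:ℕ) * (25/26)^(k+1))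
        = ((647/650:ℝ)^N * (26/25)^(r:ℕ)) * (25/26)^(k+1) := by ring
      _ ≤ (647/650:ℝ) * (25/26)^(k+1) := by
          apply mul_le_mul_of_nonneg_right key (by positivity)
  linarith

lemma geom_ineq : ∀ k, 4 ≤ k → 2/3*(1/2:ℝ)^k + (647/650)*(25/26)^(k+1) ≤ (99/100)^k := by
  intro k hk
  induction k, hk using Nat.le_induction with
  | base => norm_num
  | succ k hk ih =>
    have e1 : (2/3:ℝ)*(1/2)^(k+1) + (647/650)*(25/26)^(k+2)
        ≤ (25/26) * ((2/3:ℝ)*(1/2)^k + (647/650)*(25/26)^(k+1)) := by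
      have p1 : (0:ℝ) ≤ (1/2:ℝ)^k := by positivity
      rw [pow_succ, pow_succ]
      ring_nf
      nlinarith [pow_nonneg (by norm_num : (0:ℝ) ≤ 25/26) (k+1)]
    calc (2/3:ℝ)*(1/2)^(k+1) + (647/650)*(25/26)^(k+2)
        ≤ (25/26) * ((2/3:ℝ)*(1/2)^k + (647/650)*(25/26)^(k+1)) := e1
      _ ≤ (25/26) * (99/100)^k := by
          apply mul_le_mul_of_nonneg_left ih (by norm_num)
      _ ≤ (99/100)^(k+1) := by
          rw [pow_succ]
          nlinarith [pow_nonneg (by norm_num : (0:ℝ) ≤ 99/100) k]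

lemma main_est (N r k : ℕ) (h : 9*r < N) : tailProb N r k ≤ (99/100:ℝ)^k := by
  match k with
  | 0 =>
    simpa using tail_le_one N r 0
  | 1 =>
    obtain ⟨M, rfl⟩ : ∃ M, N = M+1 := ⟨N-1, by omega⟩
    rw [tail_succ]
    have t0 := tail_le_one M r 0
    have t1 := tail_le_one M r 1
    have t2 : tailProb M r 2 ≤ 2/3 * (1/2:ℝ)^2 + G M (((2:ℕ):ℤ) + 1 - r) := key_bound r M 2
    have c2 : G M (((2:ℕ):ℤ) + 1 - r) ≤ 79/100 := by
      apply cantelli_value M r (79/100) 3 (by norm_num) (by norm_num) _ (by push_cast; ring)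
        (by norm_num) (by omega)
      have hM : (0:ℝ) ≤ (M:ℝ) := Nat.cast_nonneg M
      nlinarith [sq_nonneg ((M:ℝ) - 32)]
    norm_num at t2 ⊢
    linarith

  | 2 =>
    have t2 : tailProb N r 2 ≤ 2/3 * (1/2:ℝ)^2 + G N (((2:ℕ):ℤ) + 1 - r) := key_bound r N 2
    have c2 : G N (((2:ℕ):ℤ) + 1 - r) ≤ 79/100 := by
      apply cantelli_value N r (79/100) 3 (by norm_num) (by norm_num) _ (by push_cast; ring)
        (by norm_num) (by omega)
      have hM : (0:ℝ) ≤ (N:ℝ) := Nat.cast_nonneg N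
      nlinarith [sq_nonneg ((N:ℝ) - 32)]
    norm_num at t2 ⊢
    linarith
  | 3 =>
    have t3 : tailProb N r 3 ≤ 2/3 * (1/2:ℝ)^3 + G N (((3:ℕ):ℤ) + 1 - r) := key_bound r N 3
    have c3 : G N (((3:ℕ):ℤ) + 1 - r) ≤ 22/25 := by
      apply cantelli_value N r (22/25) 4 (by norm_num) (by norm_num) _ (by push_cast; ring)
        (by norm_num) (by omega)
      have hM : (0:ℝ) ≤ (N:ℝ) := Nat.cast_nonneg N
      nlinarith
    norm_num at t3 ⊢
    linarith
  | (k+4) =>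
    have t := key_bound r N (k+4)
    have c := chern_combo N r (k+4) h
    have g := geom_ineq (k+4) (by omega)
    linarith

/-- There exists `c₁ > 0` such that for all `N > 9r` and all `k`,
`P(W_N > k | W_0 = r) ≤ exp (-c₁ k)`. -/
theorem markov_tail_bound :
    ∃ c₁ : ℝ, 0 < c₁ ∧ ∀ N r k : ℕ, 9 * r < N →
      tailProb N r k ≤ Real.exp (-c₁ * k) := by
  refine ⟨Real.log (100/99), Real.log_pos (by norm_num), ?_⟩
  intro N r k h
  have e : Real.exp (-Real.log (100/99) * k) = (99/100:ℝ)^k := by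
    have e1 : -Real.log (100/99) * (k:ℝ) = Real.log ((99/100:ℝ)^k) := by
      rw [Real.log_pow, ← Real.log_inv]
      norm_num
      ring
    rw [e1, Real.exp_log (by positivity)]
  rw [e]
  exact main_est N r k h
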